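/- Let k be a positive integer with gcd(k, 6) = 1. There exists a T-periodic point x ∈ D_k (i.e., x with denominator k in lowest terms and T^n(x) = x for some n ≥ 1) if and only if there exists a 0–1 vector v such that x(v) has denominator k in lowest terms (Proposition 3.1, claim 2). -/

import Mathlib

noncomputable def T (x : ℚ) : ℚ := if Even x.num then x / 2 else (3 * x + 1) / 2

def rhoL : List ℕ → ℕ
  | [] => 0
  | a :: t => a * 3 ^ t.sum + 2 * rhoL t

noncomputable def xL (l : List ℕ) : ℚ :=
  (rhoL l : ℚ) / ((2 : ℚ) ^ l.length - (3 : ℚ) ^ l.sum)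

lemma Dne (n s : ℕ) (hn : 1 ≤ n) : (2:ℚ)^n - (3:ℚ)^s ≠ 0 := by
  intro h
  have h2 : ((2^n : ℕ) : ℚ) = ((3^s : ℕ) : ℚ) := by push_cast; linarith
  have h3 : (2^n : ℕ) = 3^s := Nat.cast_injective h2
  have h4 : 2 ∣ 2^n := dvd_pow_self 2 (by omega)
  rw [h3] at h4
  have := Nat.Prime.dvd_of_dvd_pow Nat.prime_two h4
  omega

lemma Dodd (n s : ℕ) (hn : 1 ≤ n) : Odd ((2:ℤ)^n - (3:ℤ)^s) := by
  have h1 : Even ((2:ℤ)^n) := by rw [Int.even_pow]; exact ⟨even_two, by omega⟩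
  have h2 : Odd ((3:ℤ)^s) := Odd.pow (by decide)
  exact h1.sub_odd h2

lemma even_num_div (r : ℕ) (D : ℤ) (hD : Odd D) (h0 : (D:ℚ) ≠ 0) :
    (Even ((r : ℚ) / (D:ℚ)).num ↔ Even r) := by
  set q : ℚ := (r:ℚ)/(D:ℚ) with hq
  have hden : (q.den : ℚ) ≠ 0 := by exact_mod_cast q.den_ne_zero
  have hqD : q * D = r := div_mul_cancel₀ _ h0
  have hnum : (q.num : ℚ) = q * q.den := (div_eq_iff hden).mp (Rat.num_div_den q)
  have h1 : (q.num : ℚ) * D = (r:ℚ) * q.den := by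
    rw [hnum, show (q:ℚ) * (q.den:ℚ) * (D:ℚ) = (q * D) * q.den from by ring, hqD]
  have h2 : q.num * D = (r:ℤ) * q.den := by exact_mod_cast h1
  have hdvd : ((q.den : ℤ)) ∣ D := by
    have : q = Rat.divInt (r:ℤ) D := by rw [Rat.divInt_eq_div]; push_cast; rfl
    rw [this]; exact Rat.den_dvd _ _
  have hodd : ¬ Even D := Int.not_even_iff_odd.mpr hD
  have hodd2 : ¬ Even ((q.den : ℤ)) := by
    intro h
    exact hodd (even_iff_two_dvd.mpr (dvd_trans (even_iff_two_dvd.mp h) hdvd))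
  constructor
  · intro h
    have : Even (q.num * D) := h.mul_right _
    rw [h2, Int.even_mul] at this
    rcases this with h' | h'
    · exact_mod_cast h'
    · exact absurd h' hodd2
  · intro h
    have : Even ((r:ℤ) * q.den) := (Int.even_coe_nat r |>.mpr h).mul_right _
    rw [← h2, Int.even_mul] at this
    rcases this with h' | h'
    · exact h'
    · exact absurd h' hodd

/-- parity bit of a rational -/
def pbit (x : ℚ) : ℕ := if Even x.num then 0 else 1

lemma T_eq (x : ℚ) : T x = ((3:ℚ) ^ pbit x * x + (pbit x : ℚ)) / 2 := by
  unfold T pbit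
  split <;> simp

/-- parity list of the first n iterates -/
noncomputable def pl : ℕ → ℚ → List ℕ
  | 0, _ => []
  | n+1, x => pbit x :: pl n (T x)

lemma pl_length (n : ℕ) (x : ℚ) : (pl n x).length = n := by
  induction n generalizing x with
  | zero => rfl
  | succ n ih => simp [pl, ih]

lemma pl_mem (n : ℕ) (x : ℚ) : ∀ a ∈ pl n x, a = 0 ∨ a = 1 := by
  induction n generalizing x with
  | zero => simp [pl]
  | succ n ih =>
    intro a ha
    rcases List.mem_cons.mp ha with h | h
    · subst h; unfold pbit; split <;> simp
    · exact ih (T x) a h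

lemma iterA (n : ℕ) (x : ℚ) :
    T^[n] x = ((3:ℚ) ^ (pl n x).sum * x + (rhoL (pl n x) : ℚ)) / 2 ^ n := by
  induction n generalizing x with
  | zero => simp [pl, rhoL]
  | succ n ih =>
    rw [Function.iterate_succ_apply, ih (T x)]
    show _ = ((3:ℚ) ^ (pbit x :: pl n (T x)).sum * x +
      (rhoL (pbit x :: pl n (T x)) : ℚ)) / 2 ^ (n+1)
    rw [T_eq x]
    simp only [List.sum_cons, rhoL]
    push_cast
    rw [pow_add, pow_succ]
    field_simp
    ring

lemma rhoL_append_zero (t : List ℕ) : rhoL (t ++ [0]) = rhoL t := by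
  induction t with
  | nil => simp [rhoL]
  | cons b t ih => simp [rhoL, ih, List.sum_append]

lemma rhoL_append_one (t : List ℕ) : rhoL (t ++ [1]) = 3 * rhoL t + 2 ^ t.length := by
  induction t with
  | nil => simp [rhoL]
  | cons b t ih => simp [rhoL, ih, List.sum_append, pow_succ, pow_add]; ring

lemma step (a : ℕ) (t : List ℕ) (ha : a = 0 ∨ a = 1) :
    T (xL (a :: t)) = xL (t ++ [a]) := by
  have hD : (2:ℚ) ^ (t.length + 1) - (3:ℚ) ^ (a :: t).sum ≠ 0 := Dne _ _ (by omega)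
  have hcast : (((2^(t.length+1) - 3^((a::t).sum) : ℤ)) : ℚ)
      = (2:ℚ)^(t.length+1) - (3:ℚ)^((a::t).sum) := by push_cast; ring
  have hx : xL (a::t) = (rhoL (a::t) : ℚ) /
      (((2^(t.length+1) - 3^((a::t).sum) : ℤ)) : ℚ) := by
    rw [hcast]; rfl
  have hpar : Even (xL (a::t)).num ↔ Even (rhoL (a::t)) := by
    rw [hx]; exact even_num_div _ _ (Dodd _ _ (by omega)) (by rw [hcast]; exact hD)
  rcases ha with rfl | rfl
  · have he : Even (xL (0::t)).num := hpar.mpr ⟨rhoL t, by simp [rhoL]; ring⟩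
    rw [T, if_pos he, xL, xL, rhoL_append_zero]
    simp only [List.sum_cons, List.length_cons, List.sum_append, List.length_append,
      List.sum_nil, List.length_singleton, List.length_nil]
    have hr : (rhoL (0::t) : ℚ) = 2 * (rhoL t : ℚ) := by
      show ((0 * 3 ^ t.sum + 2 * rhoL t : ℕ) : ℚ) = _
      push_cast; ring
    rw [hr]
    have hD' : (2:ℚ) ^ (t.length + 1) - (3:ℚ) ^ (0 + t.sum) ≠ 0 := by
      simpa using Dne (t.length + 1) t.sum (by omega)
    simp only [zero_add] at hD' ⊢
    rw [pow_succ] at hD'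
    field_simp
    ring
  · have ho : ¬ Even (xL (1::t)).num := by
      rw [hpar]
      show ¬ Even (1 * 3 ^ t.sum + 2 * rhoL t)
      simp [Nat.even_add, Nat.even_pow]
      exact fun h => absurd h (by decide)
    rw [T, if_neg ho, xL, xL, rhoL_append_one]
    simp only [List.sum_cons, List.length_cons, List.sum_append, List.length_append,
      List.sum_nil, List.length_singleton, List.length_nil, zero_add, add_zero]
    have hr : (rhoL (1::t) : ℚ) = 3 ^ t.sum + 2 * (rhoL t : ℚ) := by
      show ((1 * 3 ^ t.sum + 2 * rhoL t : ℕ) : ℚ) = _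
      push_cast; ring
    rw [hr]
    have hD' : (2:ℚ) ^ (t.length + 1) - (3:ℚ) ^ (1 + t.sum) ≠ 0 :=
      Dne (t.length + 1) (1 + t.sum) (by omega)
    have hD'' : (2:ℚ) ^ (t.length + 1) - (3:ℚ) ^ (t.sum + 1) ≠ 0 := by
      rwa [add_comm t.sum 1]
    push_cast
    field_simp
    ring

lemma iter_rot (m : ℕ) : ∀ l : List ℕ, 1 ≤ l.length → (∀ a ∈ l, a = 0 ∨ a = 1) →
    T^[m] (xL l) = xL (l.rotate m) := by
  induction m with
  | zero => intro l _ _; simp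
  | succ m ih =>
    intro l hl hmem
    obtain ⟨a, t, rfl⟩ : ∃ a t, l = a :: t := by
      cases l with
      | nil => simp at hl
      | cons a t => exact ⟨a, t, rfl⟩
    have hmem' : ∀ b ∈ t ++ [a], b = 0 ∨ b = 1 := by
      intro b hb
      rcases List.mem_append.mp hb with h | h
      · exact hmem b (List.mem_cons_of_mem _ h)
      · have h2 := hmem a List.mem_cons_self
        rw [List.mem_singleton] at h
        omega
    rw [Function.iterate_succ_apply, step a t (hmem a List.mem_cons_self),
      ih (t ++ [a]) (by simp) hmem', List.rotate_cons_succ]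

theorem stmt_9 (k : ℕ) (hk : 0 < k) (h6 : Nat.gcd k 6 = 1) :
    (∃ x : ℚ, x.den = k ∧ ∃ n : ℕ, 1 ≤ n ∧ T^[n] x = x) ↔
    (∃ l : List ℕ, 1 ≤ l.length ∧ (∀ a ∈ l, a = 0 ∨ a = 1) ∧ (xL l).den = k) := by
  constructor
  · rintro ⟨x, hden, n, hn, hx⟩
    refine ⟨pl n x, by rw [pl_length]; exact hn, pl_mem n x, ?_⟩
    have hA := iterA n x
    rw [hx] at hA
    have hD : (2:ℚ)^n - (3:ℚ)^(pl n x).sum ≠ 0 := Dne _ _ hn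
    have h2 : ((2:ℚ)^n) ≠ 0 := by positivity
    rw [eq_div_iff h2] at hA
    have key : xL (pl n x) = x := by
      rw [xL, pl_length, div_eq_iff hD]
      linear_combination -hA
    rw [key]; exact hden
  · rintro ⟨l, hl, hmem, hden⟩
    exact ⟨xL l, hden, l.length, hl, by
      rw [iter_rot l.length l hl hmem, List.rotate_length]⟩
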